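/- Let (q₁,p₁,q₂,p₂) be a holomorphic solution of system (1) on a domain D with data (η; α₀,α₁,α₂,α₃,α₄,α₅). Set η̃ = 1−η, t̃ = 1−t, s̃ = 1−s, and define Q₁ = 1−q₁, P₁ = −p₁, Q₂ = 1−q₂, P₂ = −p₂, each regarded as a holomorphic function of (t̃,s̃). Then (Q₁,P₁,Q₂,P₂) is a holomorphic solution of system (1) in the variables (t̃,s̃) with data (η̃; α₀,α₁,α₂,α₄,α₃,α₅), on the image of D (on which automatically t̃,s̃ ∉ {0,1,η̃} and t̃ ≠ s̃). (Bäcklund transformation π₄.) -/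

import Mathlib

noncomputable section

/-- The Painlevé VI Hamiltonian `H_VI(q,p,t;β₁,β₂,β₃,β₄)` (with fixed `η`). -/
def Hvi (eta b1 b2 b3 b4 q p t : ℂ) : ℂ :=
  (q*(q-1)*(q-eta)*(q-t)*p^2
    + (b1*(t-eta)*q*(q-1) + 2*b2*q*(q-1)*(q-eta) + b3*(t-1)*q*(q-eta)
        + b4*t*(q-1)*(q-eta))*p
    + b2*((b1+b2)*(t-eta) + b2*(q-1) + b3*(t-1) + t*b4)*q)
  / (t*(t-1)*(t-eta))

/-- The first Hamiltonian `H₁` of system (1). -/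
def H1 (eta a1 a2 a3 a4 a5 q1 p1 q2 p2 t s : ℂ) : ℂ :=
  Hvi eta a1 a2 a3 a4 q1 p1 t
  + a2*p2*((-(t-1)*s*q1 + t*(s-1)*q2 + (t-s)*q1*q2)/(t*(t-1)*(t-s))
      + (q1-t)*q2*(q2-1)/(t*(t-1)*(t-eta)))
  + a5*p1*(((t-s)*q1*(q1-1) + t*(t-1)*(q1-q2))/(t*(t-1)*(t-s))
      + (q1-t)*((t-1)*q1+(q1-t)*q2)/(t*(t-1)*(t-eta)))
  - p1*p2*(((t-1)*(s*q1^2+t*q2^2) - (t-s)*q2*(q1^2+t) - 2*t*(s-1)*q1*q2)/(t*(t-1)*(t-s))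
      - (q1-t)^2*q2*(q2-1)/(t*(t-1)*(t-eta)))
  + a2*a5*(2*t*q1 - q1 - t*q2 + q1*q2 - eta*q1)/(t*(t-1)*(t-eta))

/-- The second Hamiltonian `H₂ = π(H₁)` of system (1). -/
def H2 (eta a1 a2 a3 a4 a5 q1 p1 q2 p2 t s : ℂ) : ℂ :=
  H1 eta a1 a5 a3 a4 a2 q2 p2 q1 p1 s t

/-- Admissible independent variables: `t, s ∉ {0, 1, η}` and `t ≠ s`. -/
def Adm (eta t s : ℂ) : Prop :=
  t ≠ 0 ∧ t ≠ 1 ∧ t ≠ eta ∧ s ≠ 0 ∧ s ≠ 1 ∧ s ≠ eta ∧ t ≠ s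

/-- `(q₁,p₁,q₂,p₂)` is a holomorphic solution of the Hamiltonian system (1) on the
domain `D` with data `(η; α₀,α₁,α₂,α₃,α₄,α₅)`. -/
def IsSol (eta a0 a1 a2 a3 a4 a5 : ℂ) (D : Set (ℂ × ℂ))
    (q1 p1 q2 p2 : ℂ × ℂ → ℂ) : Prop :=
  IsOpen D ∧
  (∀ x ∈ D, Adm eta x.1 x.2) ∧
  DifferentiableOn ℂ q1 D ∧ DifferentiableOn ℂ p1 D ∧
  DifferentiableOn ℂ q2 D ∧ DifferentiableOn ℂ p2 D ∧
  ∀ x ∈ D,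
    deriv (fun u => q1 (u, x.2)) x.1
      = deriv (fun y => H1 eta a1 a2 a3 a4 a5 (q1 x) y (q2 x) (p2 x) x.1 x.2) (p1 x) ∧
    deriv (fun u => p1 (u, x.2)) x.1
      = - deriv (fun y => H1 eta a1 a2 a3 a4 a5 y (p1 x) (q2 x) (p2 x) x.1 x.2) (q1 x) ∧
    deriv (fun u => q2 (u, x.2)) x.1
      = deriv (fun y => H1 eta a1 a2 a3 a4 a5 (q1 x) (p1 x) (q2 x) y x.1 x.2) (p2 x) ∧
    deriv (fun u => p2 (u, x.2)) x.1
      = - deriv (fun y => H1 eta a1 a2 a3 a4 a5 (q1 x) (p1 x) y (p2 x) x.1 x.2) (q2 x) ∧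
    deriv (fun u => q1 (x.1, u)) x.2
      = deriv (fun y => H2 eta a1 a2 a3 a4 a5 (q1 x) y (q2 x) (p2 x) x.1 x.2) (p1 x) ∧
    deriv (fun u => p1 (x.1, u)) x.2
      = - deriv (fun y => H2 eta a1 a2 a3 a4 a5 y (p1 x) (q2 x) (p2 x) x.1 x.2) (q1 x) ∧
    deriv (fun u => q2 (x.1, u)) x.2
      = deriv (fun y => H2 eta a1 a2 a3 a4 a5 (q1 x) (p1 x) (q2 x) y x.1 x.2) (p2 x) ∧
    deriv (fun u => p2 (x.1, u)) x.2
      = - deriv (fun y => H2 eta a1 a2 a3 a4 a5 (q1 x) (p1 x) y (p2 x) x.1 x.2) (q2 x)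

/-- Numerator of the part of `H₁` over the denominator `t(t−1)(t−η)`. -/
def NA (eta a1 a2 a3 a4 a5 q1 p1 q2 p2 t : ℂ) : ℂ :=
  q1*(q1-1)*(q1-eta)*(q1-t)*p1^2
    + (a1*(t-eta)*q1*(q1-1) + 2*a2*q1*(q1-1)*(q1-eta) + a3*(t-1)*q1*(q1-eta)
        + a4*t*(q1-1)*(q1-eta))*p1
    + a2*((a1+a2)*(t-eta) + a2*(q1-1) + a3*(t-1) + t*a4)*q1
    + a2*p2*((q1-t)*q2*(q2-1))
    + a5*p1*((q1-t)*((t-1)*q1+(q1-t)*q2))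
    + p1*p2*((q1-t)^2*q2*(q2-1))
    + a2*a5*(2*t*q1 - q1 - t*q2 + q1*q2 - eta*q1)

/-- Numerator of the part of `H₁` over the denominator `t(t−1)(t−s)`. -/
def NB (a2 a5 q1 p1 q2 p2 t s : ℂ) : ℂ :=
  a2*p2*(-(t-1)*s*q1 + t*(s-1)*q2 + (t-s)*q1*q2)
    + a5*p1*((t-s)*q1*(q1-1) + t*(t-1)*(q1-q2))
    - p1*p2*((t-1)*(s*q1^2+t*q2^2) - (t-s)*q2*(q1^2+t) - 2*t*(s-1)*q1*q2)

lemma H1_split (eta a1 a2 a3 a4 a5 q1 p1 q2 p2 t s : ℂ) :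
    H1 eta a1 a2 a3 a4 a5 q1 p1 q2 p2 t s
      = NA eta a1 a2 a3 a4 a5 q1 p1 q2 p2 t / (t*(t-1)*(t-eta))
        + NB a2 a5 q1 p1 q2 p2 t s / (t*(t-1)*(t-s)) := by
  unfold H1 Hvi NA NB
  ring

lemma keyA (eta b1 b2 b3 b4 b5 x1 y1 x2 y2 t : ℂ) :
    NA (1-eta) b1 b2 b4 b3 b5 (1-x1) (-y1) (1-x2) (-y2) (1-t)
      = NA (1-eta) b1 b2 b4 b3 b5 1 0 1 0 (1-t)
        + NA eta b1 b2 b3 b4 b5 x1 y1 x2 y2 t := by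
  unfold NA; ring

lemma keyB (b2 b5 x1 y1 x2 y2 t s : ℂ) :
    NB b2 b5 (1-x1) (-y1) (1-x2) (-y2) (1-t) (1-s) = NB b2 b5 x1 y1 x2 y2 t s := by
  unfold NB; ring

lemma key (eta b1 b2 b3 b4 b5 x1 y1 x2 y2 t s : ℂ) :
    H1 (1-eta) b1 b2 b4 b3 b5 (1-x1) (-y1) (1-x2) (-y2) (1-t) (1-s)
      = H1 (1-eta) b1 b2 b4 b3 b5 1 0 1 0 (1-t) (1-s)
        - H1 eta b1 b2 b3 b4 b5 x1 y1 x2 y2 t s := by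
  rw [H1_split (1-eta) b1 b2 b4 b3 b5 (1-x1) (-y1) (1-x2) (-y2) (1-t) (1-s),
      H1_split (1-eta) b1 b2 b4 b3 b5 1 0 1 0 (1-t) (1-s),
      H1_split eta b1 b2 b3 b4 b5 x1 y1 x2 y2 t s,
      keyA, keyB]
  have d1 : (1-t)*((1-t)-1)*((1-t)-(1-eta)) = -(t*(t-1)*(t-eta)) := by ring
  have d2 : (1-t)*((1-t)-1)*((1-t)-(1-s)) = -(t*(t-1)*(t-s)) := by ring
  have hB0 : NB b2 b5 1 0 1 0 (1-t) (1-s) = 0 := by unfold NB; ring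
  rw [d1, d2, hB0]
  simp only [div_neg, zero_div]
  ring

lemma deriv_sub_comp (f : ℂ → ℂ) (c a z : ℂ) :
    deriv (fun y => c - f (a - y)) z = deriv f (a - z) := by
  rw [deriv_const_sub, deriv_comp_const_sub, neg_neg]

lemma deriv_sub_comp' (f : ℂ → ℂ) (c z : ℂ) :
    deriv (fun y => c - f (-y)) z = deriv f (-z) := by
  rw [deriv_const_sub, deriv_comp_neg, neg_neg]

lemma deriv_key_q1 (eta b1 b2 b3 b4 b5 Q1 P1 Q2 P2 t s : ℂ) :
    deriv (fun w => H1 (1-eta) b1 b2 b4 b3 b5 w (-P1) (1-Q2) (-P2) (1-t) (1-s)) (1-Q1)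
      = deriv (fun w => H1 eta b1 b2 b3 b4 b5 w P1 Q2 P2 t s) Q1 := by
  have hfun : (fun w => H1 (1-eta) b1 b2 b4 b3 b5 w (-P1) (1-Q2) (-P2) (1-t) (1-s))
      = (fun w => H1 (1-eta) b1 b2 b4 b3 b5 1 0 1 0 (1-t) (1-s)
          - (fun z => H1 eta b1 b2 b3 b4 b5 z P1 Q2 P2 t s) (1 - w)) := by
    funext w
    have h := key eta b1 b2 b3 b4 b5 (1-w) P1 Q2 P2 t s
    rw [sub_sub_cancel] at h
    exact h
  rw [hfun]
  have h2 := deriv_sub_comp (fun z => H1 eta b1 b2 b3 b4 b5 z P1 Q2 P2 t s)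
    (H1 (1-eta) b1 b2 b4 b3 b5 1 0 1 0 (1-t) (1-s)) 1 (1-Q1)
  simpa [sub_sub_cancel] using h2

lemma deriv_key_p1 (eta b1 b2 b3 b4 b5 Q1 P1 Q2 P2 t s : ℂ) :
    deriv (fun w => H1 (1-eta) b1 b2 b4 b3 b5 (1-Q1) w (1-Q2) (-P2) (1-t) (1-s)) (-P1)
      = deriv (fun w => H1 eta b1 b2 b3 b4 b5 Q1 w Q2 P2 t s) P1 := by
  have hfun : (fun w => H1 (1-eta) b1 b2 b4 b3 b5 (1-Q1) w (1-Q2) (-P2) (1-t) (1-s))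
      = (fun w => H1 (1-eta) b1 b2 b4 b3 b5 1 0 1 0 (1-t) (1-s)
          - (fun z => H1 eta b1 b2 b3 b4 b5 Q1 z Q2 P2 t s) (-w)) := by
    funext w
    have h := key eta b1 b2 b3 b4 b5 Q1 (-w) Q2 P2 t s
    rw [neg_neg] at h
    exact h
  rw [hfun]
  have h2 := deriv_sub_comp' (fun z => H1 eta b1 b2 b3 b4 b5 Q1 z Q2 P2 t s)
    (H1 (1-eta) b1 b2 b4 b3 b5 1 0 1 0 (1-t) (1-s)) (-P1)
  simpa using h2

lemma deriv_key_q2 (eta b1 b2 b3 b4 b5 Q1 P1 Q2 P2 t s : ℂ) :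
    deriv (fun w => H1 (1-eta) b1 b2 b4 b3 b5 (1-Q1) (-P1) w (-P2) (1-t) (1-s)) (1-Q2)
      = deriv (fun w => H1 eta b1 b2 b3 b4 b5 Q1 P1 w P2 t s) Q2 := by
  have hfun : (fun w => H1 (1-eta) b1 b2 b4 b3 b5 (1-Q1) (-P1) w (-P2) (1-t) (1-s))
      = (fun w => H1 (1-eta) b1 b2 b4 b3 b5 1 0 1 0 (1-t) (1-s)
          - (fun z => H1 eta b1 b2 b3 b4 b5 Q1 P1 z P2 t s) (1 - w)) := by
    funext w
    have h := key eta b1 b2 b3 b4 b5 Q1 P1 (1-w) P2 t s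
    rw [sub_sub_cancel] at h
    exact h
  rw [hfun]
  have h2 := deriv_sub_comp (fun z => H1 eta b1 b2 b3 b4 b5 Q1 P1 z P2 t s)
    (H1 (1-eta) b1 b2 b4 b3 b5 1 0 1 0 (1-t) (1-s)) 1 (1-Q2)
  simpa [sub_sub_cancel] using h2

lemma deriv_key_p2 (eta b1 b2 b3 b4 b5 Q1 P1 Q2 P2 t s : ℂ) :
    deriv (fun w => H1 (1-eta) b1 b2 b4 b3 b5 (1-Q1) (-P1) (1-Q2) w (1-t) (1-s)) (-P2)
      = deriv (fun w => H1 eta b1 b2 b3 b4 b5 Q1 P1 Q2 w t s) P2 := by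
  have hfun : (fun w => H1 (1-eta) b1 b2 b4 b3 b5 (1-Q1) (-P1) (1-Q2) w (1-t) (1-s))
      = (fun w => H1 (1-eta) b1 b2 b4 b3 b5 1 0 1 0 (1-t) (1-s)
          - (fun z => H1 eta b1 b2 b3 b4 b5 Q1 P1 Q2 z t s) (-w)) := by
    funext w
    have h := key eta b1 b2 b3 b4 b5 Q1 P1 Q2 (-w) t s
    rw [neg_neg] at h
    exact h
  rw [hfun]
  have h2 := deriv_sub_comp' (fun z => H1 eta b1 b2 b3 b4 b5 Q1 P1 Q2 z t s)
    (H1 (1-eta) b1 b2 b4 b3 b5 1 0 1 0 (1-t) (1-s)) (-P2)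
  simpa using h2

/-- Bäcklund transformation `π₄` maps solutions of system (1) to solutions, with
`t̃ = 1−t`, `s̃ = 1−s`, `η̃ = 1−η` (the variable change is its own inverse). -/

theorem backlund_pi4 (eta a0 a1 a2 a3 a4 a5 : ℂ) (heta0 : eta ≠ 0) (heta1 : eta ≠ 1)
    (hrel : a0 + a1 + 2*a2 + a3 + a4 + 2*a5 = 1)
    (D : Set (ℂ × ℂ)) (q1 p1 q2 p2 : ℂ × ℂ → ℂ)
    (hsol : IsSol eta a0 a1 a2 a3 a4 a5 D q1 p1 q2 p2) :
    IsSol (1-eta) a0 a1 a2 a4 a3 a5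
      ((fun x : ℂ × ℂ => (1 - x.1, 1 - x.2)) '' D)
      (fun x => 1 - q1 (1 - x.1, 1 - x.2))
      (fun x => - p1 (1 - x.1, 1 - x.2))
      (fun x => 1 - q2 (1 - x.1, 1 - x.2))
      (fun x => - p2 (1 - x.1, 1 - x.2)) := by
  obtain ⟨hD, hadm, hq1, hp1, hq2, hp2, heqs⟩ := hsol
  have hcont : Continuous (fun x : ℂ × ℂ => ((1:ℂ) - x.1, (1:ℂ) - x.2)) :=
    (continuous_const.sub continuous_fst).prodMk (continuous_const.sub continuous_snd)
  have himg : ((fun x : ℂ × ℂ => ((1:ℂ) - x.1, 1 - x.2)) '' D)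
      = (fun x : ℂ × ℂ => ((1:ℂ) - x.1, 1 - x.2)) ⁻¹' D := by
    ext x
    constructor
    · rintro ⟨y, hy, rfl⟩
      simpa [sub_sub_cancel] using hy
    · intro hx
      exact ⟨(1 - x.1, 1 - x.2), hx, by simp [sub_sub_cancel]⟩
  have hmaps : Set.MapsTo (fun x : ℂ × ℂ => ((1:ℂ) - x.1, 1 - x.2))
      ((fun x : ℂ × ℂ => ((1:ℂ) - x.1, 1 - x.2)) '' D) D := by
    intro x hx
    rw [himg] at hx
    exact hx
  have hσ : DifferentiableOn ℂ (fun x : ℂ × ℂ => ((1:ℂ) - x.1, (1:ℂ) - x.2))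
      ((fun x : ℂ × ℂ => ((1:ℂ) - x.1, 1 - x.2)) '' D) :=
    (((differentiable_const _).sub differentiable_fst).prodMk
      ((differentiable_const _).sub differentiable_snd)).differentiableOn
  refine ⟨?_, ?_, ?_, ?_, ?_, ?_, ?_⟩
  · rw [himg]; exact hD.preimage hcont
  · rintro x ⟨y, hy, rfl⟩
    obtain ⟨t0, t1, te, s0, s1, se, ts⟩ := hadm y hy
    exact ⟨sub_ne_zero.mpr (Ne.symm t1), fun h => t0 (by linear_combination -h),
      fun h => te (by linear_combination -h), sub_ne_zero.mpr (Ne.symm s1),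
      fun h => s0 (by linear_combination -h), fun h => se (by linear_combination -h),
      fun h => ts (by linear_combination -h)⟩
  · exact (differentiableOn_const 1).sub (hq1.comp hσ hmaps)
  · exact (hp1.comp hσ hmaps).neg
  · exact (differentiableOn_const 1).sub (hq2.comp hσ hmaps)
  · exact (hp2.comp hσ hmaps).neg
  · rintro x ⟨y, hy, rfl⟩
    have E := heqs y hy
    simp only [H2] at E ⊢
    simp only [sub_sub_cancel, Prod.mk.eta]
    refine ⟨?_, ?_, ?_, ?_, ?_, ?_, ?_, ?_⟩
    · have L : deriv (fun u => (1:ℂ) - q1 (1 - u, y.2)) (1 - y.1)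
          = deriv (fun w => q1 (w, y.2)) y.1 := by
        have h := deriv_sub_comp (fun w => q1 (w, y.2)) 1 1 (1 - y.1)
        simpa [sub_sub_cancel] using h
      rw [L, deriv_key_p1 eta a1 a2 a3 a4 a5 (q1 y) (p1 y) (q2 y) (p2 y) y.1 y.2]
      exact E.1
    · have L : deriv (fun u => -p1 (1 - u, y.2)) (1 - y.1)
          = deriv (fun w => p1 (w, y.2)) y.1 := by
        have h := deriv_sub_comp (fun w => p1 (w, y.2)) 0 1 (1 - y.1)
        simpa [sub_sub_cancel] using h
      rw [L, deriv_key_q1 eta a1 a2 a3 a4 a5 (q1 y) (p1 y) (q2 y) (p2 y) y.1 y.2]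
      exact E.2.1
    · have L : deriv (fun u => (1:ℂ) - q2 (1 - u, y.2)) (1 - y.1)
          = deriv (fun w => q2 (w, y.2)) y.1 := by
        have h := deriv_sub_comp (fun w => q2 (w, y.2)) 1 1 (1 - y.1)
        simpa [sub_sub_cancel] using h
      rw [L, deriv_key_p2 eta a1 a2 a3 a4 a5 (q1 y) (p1 y) (q2 y) (p2 y) y.1 y.2]
      exact E.2.2.1
    · have L : deriv (fun u => -p2 (1 - u, y.2)) (1 - y.1)
          = deriv (fun w => p2 (w, y.2)) y.1 := by
        have h := deriv_sub_comp (fun w => p2 (w, y.2)) 0 1 (1 - y.1)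
        simpa [sub_sub_cancel] using h
      rw [L, deriv_key_q2 eta a1 a2 a3 a4 a5 (q1 y) (p1 y) (q2 y) (p2 y) y.1 y.2]
      exact E.2.2.2.1
    · have L : deriv (fun u => (1:ℂ) - q1 (y.1, 1 - u)) (1 - y.2)
          = deriv (fun w => q1 (y.1, w)) y.2 := by
        have h := deriv_sub_comp (fun w => q1 (y.1, w)) 1 1 (1 - y.2)
        simpa [sub_sub_cancel] using h
      rw [L, deriv_key_p2 eta a1 a5 a3 a4 a2 (q2 y) (p2 y) (q1 y) (p1 y) y.2 y.1]
      exact E.2.2.2.2.1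
    · have L : deriv (fun u => -p1 (y.1, 1 - u)) (1 - y.2)
          = deriv (fun w => p1 (y.1, w)) y.2 := by
        have h := deriv_sub_comp (fun w => p1 (y.1, w)) 0 1 (1 - y.2)
        simpa [sub_sub_cancel] using h
      rw [L, deriv_key_q2 eta a1 a5 a3 a4 a2 (q2 y) (p2 y) (q1 y) (p1 y) y.2 y.1]
      exact E.2.2.2.2.2.1
    · have L : deriv (fun u => (1:ℂ) - q2 (y.1, 1 - u)) (1 - y.2)
          = deriv (fun w => q2 (y.1, w)) y.2 := by
        have h := deriv_sub_comp (fun w => q2 (y.1, w)) 1 1 (1 - y.2)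
        simpa [sub_sub_cancel] using h
      rw [L, deriv_key_p1 eta a1 a5 a3 a4 a2 (q2 y) (p2 y) (q1 y) (p1 y) y.2 y.1]
      exact E.2.2.2.2.2.2.1
    · have L : deriv (fun u => -p2 (y.1, 1 - u)) (1 - y.2)
          = deriv (fun w => p2 (y.1, w)) y.2 := by
        have h := deriv_sub_comp (fun w => p2 (y.1, w)) 0 1 (1 - y.2)
        simpa [sub_sub_cancel] using h
      rw [L, deriv_key_q1 eta a1 a5 a3 a4 a2 (q2 y) (p2 y) (q1 y) (p1 y) y.2 y.1]
      exact E.2.2.2.2.2.2.2
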